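/- Let A ∈ ℝ^{n×n} be symmetric negative definite with simple eigenvalues λ₁ < ... < λ_p among its smallest p, and let X* = U_p D with D diagonal ±1. Then for each i = 1,...,p, the matrix J_{ii} = 2A - A X*_i (X*_i)ᵀ - X*_i (X*_i)ᵀ A - A x*_i (x*_i)ᵀ - ((x*_i)ᵀ x*_i) A - ((x*_i)ᵀ A x*_i) I - x*_i (x*_i)ᵀ A equals A - 2U_iΛ_iU_iᵀ - 2λ_i u_i u_iᵀ - λ_i I and is symmetric positive definite. -/

import Mathlib

open Matrix Finset

section helpers
variable {n : ℕ}

lemma mul_vecMulVec' (M : Matrix (Fin n) (Fin n) ℝ) (v w : Fin n → ℝ) :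
    M * vecMulVec v w = vecMulVec (M.mulVec v) w := by
  ext a b
  simp [Matrix.mul_apply, vecMulVec_apply, Matrix.mulVec, dotProduct,
    Finset.sum_mul, mul_assoc]

lemma vecMulVec_mul' (M : Matrix (Fin n) (Fin n) ℝ) (v w : Fin n → ℝ) :
    vecMulVec v w * M = vecMulVec v (Matrix.vecMul w M) := by
  ext a b
  simp [Matrix.mul_apply, vecMulVec_apply, Matrix.vecMul, dotProduct,
    Finset.mul_sum, mul_assoc]

lemma vecMulVec_smul_left (r : ℝ) (v w : Fin n → ℝ) :
    vecMulVec (r • v) w = r • vecMulVec v w := by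
  ext a b; simp [vecMulVec_apply, mul_assoc]

lemma vecMulVec_smul_right (r : ℝ) (v w : Fin n → ℝ) :
    vecMulVec v (r • w) = r • vecMulVec v w := by
  ext a b; simp [vecMulVec_apply]; ring

lemma vecMulVec_col (U : Matrix (Fin n) (Fin n) ℝ) (k : Fin n) :
    vecMulVec (fun j => U j k) (fun j => U j k)
      = U * Matrix.diagonal (Pi.single k 1) * Uᵀ := by
  ext a b
  rw [Matrix.mul_apply]
  simp only [Matrix.mul_diagonal, Matrix.transpose_apply, vecMulVec_apply, Pi.single_apply]
  rw [Finset.sum_eq_single k]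
  · simp
  · intro m _ hm; simp [hm]
  · simp

lemma diagonal_sum' {ι : Type*} (s : Finset ι) (f : ι → (Fin n → ℝ)) :
    Matrix.diagonal (∑ j ∈ s, f j) = ∑ j ∈ s, Matrix.diagonal (f j) := by
  ext a b
  by_cases h : a = b <;> simp [Matrix.diagonal_apply, h, Matrix.sum_apply]

end helpers

theorem stmt6 {n p : ℕ} (hpn : p ≤ n) (A U : Matrix (Fin n) (Fin n) ℝ)
    (ev : Fin n → ℝ)
    (hsymm : A.IsSymm)
    (hdecomp : A = U * Matrix.diagonal ev * Uᵀ)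
    (horth : U * Uᵀ = 1)
    (hneg : ∀ i, ev i < 0)
    (hmono : Monotone ev)
    (hsimple : ∀ i j : Fin n, (i : ℕ) < p → i < j → ev i < ev j)
    (d : Fin p → ℝ) (hd : ∀ i, d i = 1 ∨ d i = -1) :
    ∀ i : Fin p,
      let c : Fin p → Fin n := Fin.castLE hpn
      let u : Fin n → Fin n → ℝ := fun k j => U j k
      let xs : Fin p → Fin n → ℝ := fun k => d k • u (c k)
      let B : Matrix (Fin n) (Fin n) ℝ :=
        ∑ j ∈ Finset.univ.filter (· ≤ i), vecMulVec (xs j) (xs j)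
      let J : Matrix (Fin n) (Fin n) ℝ :=
        (2 : ℝ) • A - A * B - B * A - A * vecMulVec (xs i) (xs i)
          - (xs i ⬝ᵥ xs i) • A
          - (xs i ⬝ᵥ A.mulVec (xs i)) • (1 : Matrix (Fin n) (Fin n) ℝ)
          - vecMulVec (xs i) (xs i) * A
      J = A - ((2 : ℝ) • ∑ j ∈ Finset.univ.filter (· ≤ i),
              ev (c j) • vecMulVec (u (c j)) (u (c j)))
          - ((2 : ℝ) * ev (c i)) • vecMulVec (u (c i)) (u (c i))
          - ev (c i) • (1 : Matrix (Fin n) (Fin n) ℝ)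
        ∧ J.PosDef := by
  intro i c u xs B J
  have hUtU : Uᵀ * U = 1 := mul_eq_one_comm.mp horth
  have hd2 : ∀ j, d j * d j = 1 := fun j => by rcases hd j with h | h <;> simp [h]
  -- vecMulVec of xs equals vecMulVec of u
  have hx : ∀ j : Fin p, vecMulVec (xs j) (xs j) = vecMulVec (u (c j)) (u (c j)) := by
    intro j
    show vecMulVec (d j • u (c j)) (d j • u (c j)) = _
    rw [vecMulVec_smul_left, vecMulVec_smul_right, smul_smul, hd2, one_smul]
  -- A acts on columns
  have hAU : A * U = U * Matrix.diagonal ev := by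
    rw [hdecomp, Matrix.mul_assoc, Matrix.mul_assoc, hUtU, Matrix.mul_one]
  have hAu : ∀ k, A.mulVec (u k) = ev k • u k := by
    intro k
    funext a
    have h := congrFun (congrFun hAU a) k
    rw [Matrix.mul_apply, Matrix.mul_diagonal] at h
    simpa [Matrix.mulVec, dotProduct, u, mul_comm] using h
  have huu : ∀ k, u k ⬝ᵥ u k = 1 := by
    intro k
    have h := congrFun (congrFun hUtU k) k
    rw [Matrix.mul_apply] at h
    simpa [dotProduct, u, Matrix.one_apply, Matrix.transpose_apply] using h
  -- scalar values
  have hxx : xs i ⬝ᵥ xs i = 1 := by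
    show (d i • u (c i)) ⬝ᵥ (d i • u (c i)) = 1
    rw [smul_dotProduct, dotProduct_smul, huu, smul_eq_mul, smul_eq_mul, mul_one, hd2]
  have hxAx : xs i ⬝ᵥ A.mulVec (xs i) = ev (c i) := by
    show (d i • u (c i)) ⬝ᵥ A.mulVec (d i • u (c i)) = ev (c i)
    rw [Matrix.mulVec_smul, hAu, smul_dotProduct, dotProduct_smul, dotProduct_smul,
      huu, smul_eq_mul, smul_eq_mul, smul_eq_mul, mul_one]
    rw [← mul_assoc, hd2, one_mul]
  -- products with vecMulVec
  have hAvv : ∀ k, A * vecMulVec (u k) (u k) = ev k • vecMulVec (u k) (u k) := by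
    intro k
    rw [mul_vecMulVec', hAu, vecMulVec_smul_left]
  have hvvA : ∀ k, vecMulVec (u k) (u k) * A = ev k • vecMulVec (u k) (u k) := by
    intro k
    rw [vecMulVec_mul']
    have : Matrix.vecMul (u k) A = A.mulVec (u k) := by
      nth_rewrite 1 [← hsymm.eq]
      rw [Matrix.vecMul_transpose]
    rw [this, hAu, vecMulVec_smul_right]
  -- the sum S
  set S : Matrix (Fin n) (Fin n) ℝ :=
    ∑ j ∈ Finset.univ.filter (· ≤ i), ev (c j) • vecMulVec (u (c j)) (u (c j)) with hS
  have hAB : A * B = S := by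
    rw [show B = ∑ j ∈ Finset.univ.filter (· ≤ i), vecMulVec (u (c j)) (u (c j)) from
      Finset.sum_congr rfl fun j _ => hx j]
    rw [Finset.mul_sum]
    exact Finset.sum_congr rfl fun j _ => hAvv (c j)
  have hBA : B * A = S := by
    rw [show B = ∑ j ∈ Finset.univ.filter (· ≤ i), vecMulVec (u (c j)) (u (c j)) from
      Finset.sum_congr rfl fun j _ => hx j]
    rw [Finset.sum_mul]
    exact Finset.sum_congr rfl fun j _ => hvvA (c j)
  -- the equality
  have hJeq : J = A - (2:ℝ) • S - ((2:ℝ) * ev (c i)) • vecMulVec (u (c i)) (u (c i))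
      - ev (c i) • (1 : Matrix (Fin n) (Fin n) ℝ) := by
    show (2 : ℝ) • A - A * B - B * A - A * vecMulVec (xs i) (xs i)
          - (xs i ⬝ᵥ xs i) • A
          - (xs i ⬝ᵥ A.mulVec (xs i)) • (1 : Matrix (Fin n) (Fin n) ℝ)
          - vecMulVec (xs i) (xs i) * A = _
    rw [hAB, hBA, hxx, hxAx, hx i, hAvv, hvvA, one_smul]
    module
  refine ⟨hJeq, ?_⟩
  -- diagonal representation of J
  set m : Fin n → ℝ :=
    ev - (2:ℝ) • (∑ j ∈ Finset.univ.filter (· ≤ i),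
        ev (c j) • (Pi.single (c j) (1:ℝ) : Fin n → ℝ))
      - ((2:ℝ) * ev (c i)) • (Pi.single (c i) (1:ℝ) : Fin n → ℝ)
      - ev (c i) • (1 : Fin n → ℝ) with hm
  have hdiagm : Matrix.diagonal m = Matrix.diagonal ev
      - (2:ℝ) • (∑ j ∈ Finset.univ.filter (· ≤ i),
          ev (c j) • Matrix.diagonal (Pi.single (c j) (1:ℝ)))
      - ((2:ℝ) * ev (c i)) • Matrix.diagonal (Pi.single (c i) (1:ℝ))
      - ev (c i) • (1 : Matrix (Fin n) (Fin n) ℝ) := by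
    ext a b
    by_cases h : a = b
    · subst h
      simp [Matrix.diagonal_apply_eq, Matrix.sum_apply, Matrix.one_apply, hm,
        Matrix.sub_apply, Matrix.smul_apply, Finset.mul_sum]
    · simp [Matrix.diagonal_apply_ne _ h, Matrix.sum_apply, Matrix.one_apply, h, hm,
        Matrix.sub_apply, Matrix.smul_apply]
  have hvvc : ∀ k, vecMulVec (u k) (u k) = U * Matrix.diagonal (Pi.single k 1) * Uᵀ :=
    fun k => vecMulVec_col U k
  have hJφ : A - (2:ℝ) • S - ((2:ℝ) * ev (c i)) • vecMulVec (u (c i)) (u (c i))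
      - ev (c i) • (1 : Matrix (Fin n) (Fin n) ℝ) = U * Matrix.diagonal m * Uᵀ := by
    rw [hdiagm]
    simp only [Matrix.mul_sub, Matrix.sub_mul, Matrix.mul_smul, Matrix.smul_mul,
      Finset.mul_sum, Finset.sum_mul, Matrix.mul_one, horth, ← hdecomp]
    rw [hS]
    simp only [hvvc]
  -- positivity of the diagonal entries
  have hsum_eval : ∀ k : Fin n,
      (∑ j ∈ Finset.univ.filter (· ≤ i),
          ev (c j) • (Pi.single (c j) (1:ℝ) : Fin n → ℝ)) k
        = if (k:ℕ) ≤ (i:ℕ) then ev k else 0 := by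
    intro k
    rw [Finset.sum_apply]
    by_cases hk : (k:ℕ) ≤ (i:ℕ)
    · have hkp : (k:ℕ) < p := lt_of_le_of_lt hk i.isLt
      rw [Finset.sum_eq_single (⟨(k:ℕ), hkp⟩ : Fin p)]
      · have hck : c (⟨(k:ℕ), hkp⟩ : Fin p) = k := by
          apply Fin.ext; rfl
        simp [hck, hk]
      · intro j _ hne
        have hck : c j ≠ k := by
          intro h
          apply hne
          apply Fin.ext
          have : ((c j : Fin n) : ℕ) = (j:ℕ) := rfl
          simp [← this, h]
        simp [Pi.single_apply, Ne.symm hck]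
      · intro hmem
        exact absurd (Finset.mem_filter.mpr ⟨Finset.mem_univ _, by
          show (⟨(k:ℕ), hkp⟩ : Fin p) ≤ i
          exact hk⟩) hmem
    · rw [if_neg hk]
      apply Finset.sum_eq_zero
      intro j hj
      have hji : j ≤ i := by simpa using (Finset.mem_filter.mp hj).2
      have hck : c j ≠ k := by
        intro h
        apply hk
        rw [← h]
        exact hji
      simp [Pi.single_apply, Ne.symm hck]
  have hmpos : ∀ k, 0 < m k := by
    intro k
    have hmk : m k = ev k - 2 * (if (k:ℕ) ≤ (i:ℕ) then ev k else 0)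
        - (2 * ev (c i)) * (if k = c i then 1 else 0) - ev (c i) := by
      rw [hm]
      simp only [Pi.sub_apply, Pi.smul_apply, smul_eq_mul, Pi.one_apply, mul_one,
        Pi.single_apply, hsum_eval k]
    have hci : ((c i : Fin n) : ℕ) = (i:ℕ) := rfl
    rcases lt_trichotomy (k:ℕ) ((i:ℕ)) with h | h | h
    · have hki : k ≠ c i := by
        intro e
        rw [e, hci] at h
        exact lt_irrefl _ h
      rw [hmk, if_pos (le_of_lt h), if_neg hki]
      have h1 := hneg k
      have h2 := hneg (c i)
      linarith
    · have hki : k = c i := by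
        apply Fin.ext
        rw [hci]; exact h
      rw [hmk, hki, if_pos (le_of_eq hci), if_pos rfl]
      have h2 := hneg (c i)
      linarith
    · have hki : k ≠ c i := by
        intro e
        rw [e, hci] at h
        exact lt_irrefl _ h
      rw [hmk, if_neg (not_le.mpr h), if_neg hki]
      have h3 := hsimple (c i) k (by rw [hci]; exact i.isLt) (by
        rw [Fin.lt_def, hci]; exact h)
      linarith
  have hdm : (Matrix.diagonal m).PosDef := Matrix.PosDef.diagonal hmpos
  rw [hJeq, hJφ]
  refine Matrix.PosDef.of_dotProduct_mulVec_pos ?_ ?_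
  · rw [Matrix.IsHermitian, Matrix.conjTranspose_eq_transpose_of_trivial,
      Matrix.transpose_mul, Matrix.transpose_mul, Matrix.transpose_transpose,
      Matrix.diagonal_transpose, Matrix.mul_assoc]
  · intro x hx
    have hy : Uᵀ.mulVec x ≠ 0 := by
      intro h
      apply hx
      have h2 := congrArg (U.mulVec) h
      rwa [Matrix.mulVec_mulVec, horth, Matrix.one_mulVec, Matrix.mulVec_zero] at h2
    have key := hdm.dotProduct_mulVec_pos hy
    have hrw : star x ⬝ᵥ (U * Matrix.diagonal m * Uᵀ) *ᵥ x
        = star (Uᵀ *ᵥ x) ⬝ᵥ (Matrix.diagonal m *ᵥ (Uᵀ *ᵥ x)) := by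
      rw [star_trivial, star_trivial, ← Matrix.mulVec_mulVec, ← Matrix.mulVec_mulVec,
        Matrix.dotProduct_mulVec, ← Matrix.mulVec_transpose]
    rw [hrw]
    exact key
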